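/- For any finite simple graph G and locally injective function g, every clique of G on k+1 vertices (k ≥ 0) arises from a unique pair (x, c) where x is a vertex and c is a clique of S_g(x) on k vertices (with the empty clique allowed), via c ↦ c ∪ {x}; here x is the g-maximal vertex of the clique. -/
import Mathlib


open Finset
open scoped Classical

/-- The sub-level sphere of `x`: neighbors `y` of `x` with `g y < g x`. -/
def sphSet {V : Type*} (G : SimpleGraph V) (g : V → ℝ) (x : V) : Set V :=
  {y | G.Adj x y ∧ g y < g x}

/-- Each nonempty clique `K` of `G` decomposes uniquely as `K = {x} ∪ c` with `x` the
`g`-maximal vertex of `K` and `c` a (possibly empty) clique contained in `S_g(x)`: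
the bijection `c ↦ c ∪ {x}` underlying the parametrized Poincaré–Hopf formula. -/
theorem clique_unique_decomposition {V : Type*} [Fintype V] (G : SimpleGraph V) (g : V → ℝ)
    (hg : ∀ ⦃a b : V⦄, G.Adj a b → g a ≠ g b)
    (K : Finset V) (hK : G.IsClique (K : Set V)) (hne : K.Nonempty) :
    ∃! p : V × Finset V,
      p.1 ∈ K ∧ p.1 ∉ p.2 ∧ K = insert p.1 p.2 ∧
      (↑p.2 : Set V) ⊆ sphSet G g p.1 ∧ G.IsClique (p.2 : Set V) ∧
      (∀ u ∈ K, u ≠ p.1 → g u < g p.1) := by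
  obtain ⟨x, hxK, hmax⟩ := K.exists_max_image g hne
  have hstrict : ∀ u ∈ K, u ≠ x → g u < g x := by
    intro u hu hux
    have hadj : G.Adj x u := hK hxK hu (fun h => hux h.symm)
    exact lt_of_le_of_ne (hmax u hu) (fun h => hg hadj h.symm)
  refine ⟨(x, K.erase x), ⟨hxK, K.notMem_erase x, (K.insert_erase hxK).symm, ?_, ?_, hstrict⟩, ?_⟩
  · intro y hy
    simp only [Finset.coe_erase, Set.mem_diff, Set.mem_singleton_iff, Finset.mem_coe] at hy
    exact ⟨hK hxK hy.1 (fun h => hy.2 h.symm), hstrict y hy.1 hy.2⟩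
  · exact hK.subset (by simp [Finset.coe_erase, Set.diff_subset])
  · rintro ⟨x', c'⟩ ⟨hx'K, hx'c, hKeq, _, _, hmax'⟩
    have hxx' : x' = x := by
      by_contra h
      exact absurd (hstrict x' hx'K h) (not_lt.2 (le_of_lt (hmax' x hxK (fun hh => h hh.symm))))
    subst hxx'
    have : c' = K.erase x' := by
      ext u
      constructor
      · intro hu
        refine Finset.mem_erase.2 ⟨fun h => hx'c (h ▸ hu), ?_⟩
        rw [hKeq]; exact Finset.mem_insert_of_mem hu
      · intro hu
        obtain ⟨hne', huK⟩ := Finset.mem_erase.1 hu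
        rw [hKeq] at huK
        exact (Finset.mem_insert.1 huK).resolve_left hne'
    simp [this]
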